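/- For all complex numbers z, w and p > 0, |F(z+w) - F(z)| ≤ C (|w| |z|^p + |w|^{p+1}) for some constant C depending only on p, where F(z) = |z|^p z. -/

import Mathlib

lemma young_aux (p a b : ℝ) (hp : 0 < p) (hb : 0 ≤ b) (hab : b ≤ a) :
    (a ^ p - b ^ p) * b ≤ p * (a ^ p * (a - b)) := by
  have ha : 0 ≤ a := hb.trans hab
  rcases eq_or_lt_of_le hb with hb0 | hb0
  · rw [← hb0]; simp; positivity
  have ha0 : 0 < a := lt_of_lt_of_le hb0 hab
  have hpq : ((p+1)/p).HolderConjugate (p+1) := by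
    refine Real.holderConjugate_iff.mpr ⟨?_, ?_⟩
    · rw [lt_div_iff₀ hp]; linarith
    · field_simp
  have hY := Real.young_inequality_of_nonneg (a := a ^ p) (b := b)
      (Real.rpow_nonneg ha p) hb hpq
  have h1 : (a ^ p) ^ ((p+1)/p) = a ^ (p+1) := by
    rw [← Real.rpow_mul ha]
    congr 1
    field_simp
  rw [h1] at hY
  have h2 : a ^ (p+1) = a ^ p * a := Real.rpow_add_one ha0.ne' p
  have h3 : b ^ (p+1) = b ^ p * b := Real.rpow_add_one hb0.ne' p
  rw [h2, h3] at hY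
  -- hY : a^p * b ≤ (a^p * a) / ((p+1)/p) + (b^p * b)/(p+1)
  rw [div_div_eq_mul_div, ← add_div] at hY
  have hp1 : (0:ℝ) < p + 1 := by linarith
  rw [le_div_iff₀ hp1] at hY
  nlinarith [hY]

lemma two_rpow_aux (p x y : ℝ) (hp : 0 < p) (hx : 0 ≤ x) (hy : 0 ≤ y) :
    (x + y) ^ p ≤ 2 ^ p * (x ^ p + y ^ p) := by
  have h1 : x + y ≤ 2 * max x y := by
    rcases le_total x y with h | h <;> simp [max_eq_right, max_eq_left, h] <;> linarith
  calc (x + y) ^ p ≤ (2 * max x y) ^ p :=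
        Real.rpow_le_rpow (by linarith) h1 hp.le
    _ = 2 ^ p * (max x y) ^ p :=
        Real.mul_rpow (by norm_num) (le_max_iff.mpr (Or.inl hx))
    _ ≤ 2 ^ p * (x ^ p + y ^ p) := by
        gcongr
        rcases le_total x y with h | h
        · rw [max_eq_right h]
          nlinarith [Real.rpow_nonneg hx p]
        · rw [max_eq_left h]
          nlinarith [Real.rpow_nonneg hy p]

theorem stmt_5 (p : ℝ) (hp : 0 < p) :
    ∃ C : ℝ, 0 < C ∧ ∀ z w : ℂ,
      ‖((‖z + w‖ ^ p : ℝ) : ℂ) * (z + w) - ((‖z‖ ^ p : ℝ) : ℂ) * z‖ ≤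
        C * (‖w‖ * ‖z‖ ^ p + ‖w‖ ^ (p + 1)) := by
  refine ⟨(1 + p) * 2 ^ p, by positivity, fun z w => ?_⟩
  rcases eq_or_ne w 0 with rfl | hw
  · simp
    positivity
  have hw0 : 0 < ‖w‖ := norm_pos_iff.mpr hw
  set a := ‖z + w‖ with ha
  set b := ‖z‖ with hb
  have ha0 : 0 ≤ a := norm_nonneg _
  have hb0 : 0 ≤ b := norm_nonneg _
  -- key bound : LHS ≤ (1+p) * max a b ^ p * ‖w‖
  have key : ‖((a ^ p : ℝ) : ℂ) * (z + w) - ((b ^ p : ℝ) : ℂ) * z‖ ≤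
      (1 + p) * (max a b) ^ p * ‖w‖ := by
    rcases le_total b a with hab | hab
    · rw [max_eq_left hab]
      have hdecomp : ((a ^ p : ℝ) : ℂ) * (z + w) - ((b ^ p : ℝ) : ℂ) * z =
          ((a ^ p : ℝ) : ℂ) * w + (((a ^ p - b ^ p : ℝ)) : ℂ) * z := by
        push_cast
        ring
      rw [hdecomp]
      have h1 : ‖((a ^ p : ℝ) : ℂ) * w‖ ≤ a ^ p * ‖w‖ := by
        rw [norm_mul, Complex.norm_real, Real.norm_eq_abs,
          abs_of_nonneg (Real.rpow_nonneg ha0 p)]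
      have h2 : ‖(((a ^ p - b ^ p : ℝ)) : ℂ) * z‖ ≤ p * (a ^ p * ‖w‖) := by
        rw [norm_mul, Complex.norm_real, Real.norm_eq_abs, ← hb,
          abs_of_nonneg (by nlinarith [Real.rpow_le_rpow hb0 hab hp.le] : (0:ℝ) ≤ a ^ p - b ^ p)]
        have hsub : a - b ≤ ‖w‖ := by
          have := norm_sub_norm_le (z + w) z
          simpa using this
        calc (a ^ p - b ^ p) * b ≤ p * (a ^ p * (a - b)) := young_aux p a b hp hb0 hab
          _ ≤ p * (a ^ p * ‖w‖) := by gcongr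
      calc ‖((a ^ p : ℝ) : ℂ) * w + (((a ^ p - b ^ p : ℝ)) : ℂ) * z‖
          ≤ ‖((a ^ p : ℝ) : ℂ) * w‖ + ‖(((a ^ p - b ^ p : ℝ)) : ℂ) * z‖ := norm_add_le _ _
        _ ≤ a ^ p * ‖w‖ + p * (a ^ p * ‖w‖) := add_le_add h1 h2
        _ = (1 + p) * a ^ p * ‖w‖ := by ring
    · rw [max_eq_right hab]
      have hdecomp : ((a ^ p : ℝ) : ℂ) * (z + w) - ((b ^ p : ℝ) : ℂ) * z =
          ((b ^ p : ℝ) : ℂ) * w + (((a ^ p - b ^ p : ℝ)) : ℂ) * (z + w) := by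
        push_cast
        ring
      rw [hdecomp]
      have h1 : ‖((b ^ p : ℝ) : ℂ) * w‖ ≤ b ^ p * ‖w‖ := by
        rw [norm_mul, Complex.norm_real, Real.norm_eq_abs,
          abs_of_nonneg (Real.rpow_nonneg hb0 p)]
      have h2 : ‖(((a ^ p - b ^ p : ℝ)) : ℂ) * (z + w)‖ ≤ p * (b ^ p * ‖w‖) := by
        rw [norm_mul, Complex.norm_real, Real.norm_eq_abs, ← ha, abs_sub_comm,
          abs_of_nonneg (by nlinarith [Real.rpow_le_rpow ha0 hab hp.le] : (0:ℝ) ≤ b ^ p - a ^ p)]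
        have hsub : b - a ≤ ‖w‖ := by
          have := norm_sub_norm_le z (z + w)
          simpa [norm_sub_rev] using this
        calc (b ^ p - a ^ p) * a ≤ p * (b ^ p * (b - a)) := young_aux p b a hp ha0 hab
          _ ≤ p * (b ^ p * ‖w‖) := by gcongr
      calc ‖((b ^ p : ℝ) : ℂ) * w + (((a ^ p - b ^ p : ℝ)) : ℂ) * (z + w)‖
          ≤ _ + _ := norm_add_le _ _
        _ ≤ b ^ p * ‖w‖ + p * (b ^ p * ‖w‖) := add_le_add h1 h2
        _ = (1 + p) * b ^ p * ‖w‖ := by ring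
  have hmax : (max a b) ^ p ≤ 2 ^ p * (b ^ p + ‖w‖ ^ p) := by
    have h1 : max a b ≤ b + ‖w‖ := by
      rcases le_total b a with h | h
      · rw [max_eq_left h]
        have := norm_add_le z w
        simpa using this
      · rw [max_eq_right h]; linarith [norm_nonneg w]
    calc (max a b) ^ p ≤ (b + ‖w‖) ^ p :=
          Real.rpow_le_rpow (le_max_iff.mpr (Or.inr hb0)) h1 hp.le
      _ ≤ 2 ^ p * (b ^ p + ‖w‖ ^ p) := two_rpow_aux p b ‖w‖ hp hb0 hw0.le
  have hwp : ‖w‖ ^ p * ‖w‖ = ‖w‖ ^ (p + 1) := (Real.rpow_add_one hw0.ne' p).symm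
  calc ‖((a ^ p : ℝ) : ℂ) * (z + w) - ((b ^ p : ℝ) : ℂ) * z‖
      ≤ (1 + p) * (max a b) ^ p * ‖w‖ := key
    _ ≤ (1 + p) * (2 ^ p * (b ^ p + ‖w‖ ^ p)) * ‖w‖ := by gcongr
    _ = (1 + p) * 2 ^ p * (‖w‖ * b ^ p + ‖w‖ ^ (p + 1)) := by
        rw [← hwp]; ring
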